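/- For m ∈ ℕ let Q_m be the unique polynomial with Q_m(t²) = P_{2m}(t) for all t (it exists because P_{2m} is an even polynomial). Then for every h with 0 ≤ h ≤ m, the h-th derivative of Q_m at 1 equals Q_m^{(h)}(1) = 2^{−h} · ( (2m+2h−1)!! / (2m−1)!! ) · ( (2m)!! / ( (2h)!!·(2m−2h)!! ) ). -/

import Mathlib

open Polynomial
open scoped Nat

/-- The `n`-th Legendre polynomial, via the Rodrigues formula. -/
noncomputable def legendre (n : ℕ) : Polynomial ℝ :=
  Polynomial.C (1 / ((2:ℝ) ^ n * n.factorial)) *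
    Polynomial.derivative^[n] ((Polynomial.X ^ 2 - 1) ^ n)

lemma leib (h : ℕ) : ∀ p q : Polynomial ℝ, p.natDegree ≤ 2 →
    derivative^[h] (p * q) =
      p * derivative^[h] q + h • (derivative p * derivative^[h-1] q)
        + (h.choose 2) • (derivative (derivative p) * derivative^[h-2] q) := by
  induction h with
  | zero => intro p q hp; simp
  | succ h IH =>
    intro p q hp
    have hp' : (derivative p).natDegree ≤ 2 :=
      le_trans (natDegree_derivative_le p) (by omega)
    have hppp : derivative (derivative (derivative p)) = 0 := by
      have h1 := natDegree_derivative_le p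
      have h2 := natDegree_derivative_le (derivative p)
      have : (derivative (derivative p)).natDegree ≤ 0 := by omega
      rw [eq_C_of_natDegree_le_zero this, derivative_C]
    rw [Function.iterate_succ_apply, derivative_mul,
      iterate_map_add, IH _ _ hp', IH _ _ hp, hppp]
    match h with
    | 0 => simp; ring
    | 1 => simp [Function.iterate_succ_apply]; ring
    | (k+2) =>
      simp only [Nat.add_sub_cancel, Nat.succ_sub_one, show k+2-2 = k by omega,
        show k+3-1 = k+2 by omega, show k+3-2 = k+1 by omega,
        show k+1-1 = k by omega,
        ← Function.iterate_succ_apply derivative, zero_mul, smul_zero, add_zero,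
        nsmul_eq_mul]
      push_cast
      rw [Nat.choose_succ_succ (k+2) 1]
      push_cast [Nat.choose_one_right]
      ring

lemma two_mul_choose_two (n : ℕ) : 2 * ((n+1).choose 2) = (n+1) * n := by
  induction n with
  | zero => rfl
  | succ k ih =>
    rw [Nat.choose_succ_succ (k+1) 1, Nat.mul_add, ih, Nat.choose_one_right]
    ring

lemma legendre_eval_one (n : ℕ) : (legendre n).eval 1 = 1 := by
  have hfact : ((X:Polynomial ℝ)^2 - 1)^n = (X - C 1)^n * (X + 1)^n := by
    rw [← mul_pow]; congr 1; simp; ring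
  have hsum : (derivative^[n] (((X:Polynomial ℝ)^2 - 1)^n)).eval 1
      = (n.factorial : ℝ) * 2^n := by
    rw [hfact, iterate_derivative_mul, eval_finset_sum]
    rw [Finset.sum_eq_single_of_mem 0 (Finset.mem_range.2 (Nat.succ_pos n))]
    · rw [Nat.sub_zero, iterate_derivative_X_sub_pow_self]
      simp
      norm_num
    · intro k hk hk0
      rw [iterate_derivative_X_sub_pow]
      have hkn : k ≤ n := by simpa using Nat.lt_succ_iff.mp (Finset.mem_range.mp hk)
      have : n - (n - k) = k := by omega
      rw [this]
      simp [zero_pow hk0]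
  unfold legendre
  rw [eval_mul, hsum, eval_C]
  have h1 : (2:ℝ)^n ≠ 0 := by positivity
  have h2 : (n.factorial : ℝ) ≠ 0 := by positivity
  field_simp

lemma legendre_ode (n : ℕ) (hn : 1 ≤ n) :
    ((X:Polynomial ℝ)^2 - 1) * derivative (derivative (legendre n))
        + 2 * X * derivative (legendre n)
      = ((n*(n+1) : ℕ) : Polynomial ℝ) * legendre n := by
  set y : Polynomial ℝ := ((X:Polynomial ℝ)^2 - 1)^n with hy
  have hdeg1 : ((X:Polynomial ℝ)^2 - 1).natDegree ≤ 2 := by compute_degree!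
  have hdeg2 : ((((2*n:ℕ)) : Polynomial ℝ) * X).natDegree ≤ 2 := by compute_degree!
  have E1 : ((X:Polynomial ℝ)^2 - 1) * derivative y = ((((2*n:ℕ)):Polynomial ℝ) * X) * y := by
    rw [hy, derivative_pow]
    have h1 : ((X:Polynomial ℝ)^2-1) * (C (n:ℝ) * (X^2-1)^(n-1) * derivative (X^2-1))
         = C (n:ℝ) * ((X^2-1)^(n-1) * (X^2-1)) * derivative (X^2-1) := by ring
    rw [h1, ← pow_succ, Nat.sub_add_cancel hn]
    simp only [C_eq_natCast, map_ofNat]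
    have h2 : derivative ((X:Polynomial ℝ)^2-1) = C 2 * X := by
      simp [derivative_X_pow]
      exact one_add_one_eq_two.trans (map_ofNat C 2).symm
    rw [h2, show (C (2:ℝ)) = (2:Polynomial ℝ) from map_ofNat C 2]
    push_cast
    ring
  have E2 := congrArg (derivative^[n+1]) E1
  rw [leib (n+1) _ _ hdeg1, leib (n+1) _ _ hdeg2] at E2
  have h2X : derivative (((X:Polynomial ℝ))^2 - 1) = C 2 * X := by
    simp [derivative_X_pow]
    exact one_add_one_eq_two.trans (map_ofNat C 2).symm
  have h2C : derivative (C (2:ℝ) * X) = C 2 := derivative_C_mul_X 2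
  have hCn : derivative ((((2*n:ℕ)):Polynomial ℝ) * X) = (((2*n:ℕ)):Polynomial ℝ) := by
    rw [← C_eq_natCast, derivative_C_mul_X]
  have hCn2 : derivative ((((2*n:ℕ)):Polynomial ℝ)) = 0 := derivative_natCast
  rw [h2X, h2C, hCn, hCn2] at E2
  simp only [show (C (2:ℝ)) = (2:Polynomial ℝ) from map_ofNat C 2] at E2
  simp only [Nat.add_sub_cancel, show n+1-2 = n-1 by omega, zero_mul, smul_zero,
    add_zero, nsmul_eq_mul] at E2
  rw [show derivative^[n] (derivative y) = derivative^[n+1] y from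
      (Function.iterate_succ_apply derivative n y).symm,
    show derivative^[n+1] (derivative y) = derivative^[n+2] y from
      (Function.iterate_succ_apply derivative (n+1) y).symm,
    show derivative^[n-1] (derivative y) = derivative^[n] y by
      conv_rhs => rw [show n = (n-1)+1 by omega]
      rw [Function.iterate_succ_apply]] at E2
  have hc : (((n+1).choose 2 : ℕ) : Polynomial ℝ) * 2
      = ((n:Polynomial ℝ)+1) * (n:Polynomial ℝ) := by
    have := two_mul_choose_two n
    have h3 : (((2 * (n+1).choose 2 : ℕ)) : Polynomial ℝ) = (((n+1)*n : ℕ) : Polynomial ℝ) := by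
      rw [this]
    push_cast at h3
    linear_combination h3
  have hleg : legendre n = C (1 / ((2:ℝ) ^ n * n.factorial)) * derivative^[n] y := rfl
  have hleg1 : derivative (legendre n)
      = C (1 / ((2:ℝ) ^ n * n.factorial)) * derivative^[n+1] y := by
    rw [hleg, derivative_C_mul, ← Function.iterate_succ_apply' derivative n y]
  have hleg2 : derivative (derivative (legendre n))
      = C (1 / ((2:ℝ) ^ n * n.factorial)) * derivative^[n+2] y := by
    rw [hleg1, derivative_C_mul, ← Function.iterate_succ_apply' derivative (n+1) y]
  rw [hleg2, hleg1, hleg]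
  linear_combination (norm := (push_cast; ring1))
    C (1 / ((2:ℝ) ^ n * n.factorial)) * E2
      - C (1 / ((2:ℝ) ^ n * n.factorial)) * (derivative^[n] y) * hc

lemma comp_sq_eq_zero {R : Polynomial ℝ} (h : R.comp (X^2) = 0) : R = 0 := by
  apply Polynomial.eq_zero_of_infinite_isRoot
  apply Set.Infinite.mono (s := Set.Ici (0:ℝ)) ?_ (Set.Ici_infinite 0)
  intro x hx
  have h2 := congrArg (eval (Real.sqrt x)) h
  rw [eval_comp] at h2
  simp only [eval_pow, eval_X, eval_zero] at h2
  rw [Real.sq_sqrt hx] at h2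
  exact h2

lemma rec_eval (n : ℕ) (Q : Polynomial ℝ)
    (hR : ((4:Polynomial ℝ)*X^2 - 4*X) * derivative (derivative Q) + (6*X - 2) * derivative Q
      - ((n*(n+1):ℕ) : Polynomial ℝ) * Q = 0) (h : ℕ) :
    4*((h:ℝ)+1) * (derivative^[h+1] Q).eval 1
      = (((n*(n+1):ℕ):ℝ) - 4*(h:ℝ)^2 - 2*(h:ℝ)) * (derivative^[h] Q).eval 1 := by
  have hdeg1 : ((4:Polynomial ℝ)*X^2 - 4*X).natDegree ≤ 2 := by compute_degree!
  have hdeg2 : ((6:Polynomial ℝ)*X - 2).natDegree ≤ 2 := by compute_degree!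
  have d11 : derivative ((4:Polynomial ℝ)*X^2 - 4*X) = 8*X - 4 := by
    simp [derivative_X_pow, show (C (2:ℝ)) = (2:Polynomial ℝ) from map_ofNat C 2]; ring
  have d12 : derivative ((8:Polynomial ℝ)*X - 4) = 8 := by simp
  have d21 : derivative ((6:Polynomial ℝ)*X - 2) = 6 := by simp
  have d22 : derivative ((6:Polynomial ℝ):Polynomial ℝ) = 0 := by simp
  match h with
  | 0 =>
    have E := congrArg (eval 1) hR
    simp only [eval_add, eval_sub, eval_mul, eval_pow, eval_X, eval_ofNat, eval_natCast,
      eval_zero] at E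
    simp only [zero_add, Function.iterate_one, Function.iterate_zero, id_eq, Nat.cast_zero]
    push_cast
    push_cast at E
    linear_combination E
  | 1 =>
    have E := congrArg (fun p => (derivative p).eval 1) hR
    simp only [map_sub, map_add, derivative_mul, d11, d21, derivative_zero] at E
    rw [show derivative (((n*(n+1):ℕ)) : Polynomial ℝ) = 0 from derivative_natCast] at E
    simp only [eval_add, eval_sub, eval_mul, eval_pow, eval_X, eval_ofNat, eval_natCast,
      eval_zero, zero_mul, add_zero, zero_add] at E
    simp only [show (2:ℕ) = 1 + 1 from rfl, Function.iterate_succ_apply', Function.iterate_zero,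
      Function.iterate_one, id_eq, Nat.cast_one]
    push_cast
    push_cast at E
    linear_combination E
  | (k+2) =>
    have E := congrArg (fun p => (derivative^[k+2] p).eval 1) hR
    simp only [iterate_map_sub, iterate_map_add, iterate_map_zero] at E
    rw [leib (k+2) _ _ hdeg1, leib (k+2) _ _ hdeg2,
      iterate_derivative_natCast_mul, d11, d12, d21, d22] at E
    simp only [show k+2-1 = k+1 from rfl, show k+2-2 = k from rfl, zero_mul, smul_zero,
      add_zero, nsmul_eq_mul,
      ← Function.iterate_succ_apply derivative] at E
    simp only [eval_add, eval_sub, eval_mul, eval_pow, eval_X, eval_ofNat, eval_natCast,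
      eval_zero] at E
    have hc2 : (((k+2).choose 2 : ℕ) : ℝ) * 2 = ((k:ℝ)+2)*((k:ℝ)+1) := by
      have h3 := two_mul_choose_two (k+1)
      have h4 : ((2 * ((k+2).choose 2) : ℕ) : ℝ) = (((k+2)*(k+1) : ℕ) : ℝ) := by rw [h3]
      push_cast at h4
      linear_combination h4
    push_cast
    push_cast at E
    linear_combination E - 4*((derivative^[k+2] Q).eval 1)*hc2

/-- if `Q_m` is the (unique) polynomial with `Q_m(t²) = P_{2m}(t)`, then for
`h ≤ m` its `h`-th derivative at `1` is
`2^{−h}·((2m+2h−1)‼/(2m−1)‼)·((2m)‼/((2h)‼(2m−2h)‼))`. -/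
theorem stmt_9 (m : ℕ) (Q : Polynomial ℝ)
    (hQ : ∀ t : ℝ, Q.eval (t ^ 2) = (legendre (2 * m)).eval t)
    (h : ℕ) (hh : h ≤ m) :
    (Polynomial.derivative^[h] Q).eval 1
      = (1 / 2 ^ h) * (((2 * m + 2 * h - 1)‼ : ℝ) / ((2 * m - 1)‼ : ℝ)) *
          (((2 * m)‼ : ℝ) / (((2 * h)‼ : ℝ) * ((2 * m - 2 * h)‼ : ℝ))) := by
  have hQ1 : Q.eval 1 = 1 := by
    have h1 := hQ 1
    rw [one_pow] at h1
    rw [h1, legendre_eval_one]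
  have hrec : 1 ≤ m → ∀ j : ℕ, 4*((j:ℝ)+1) * (derivative^[j+1] Q).eval 1
      = (((2*m*(2*m+1):ℕ):ℝ) - 4*(j:ℝ)^2 - 2*(j:ℝ)) * (derivative^[j] Q).eval 1 := by
    intro hm
    apply rec_eval (2*m) Q
    have hQP : Q.comp (X^2) = legendre (2*m) := by
      apply Polynomial.funext
      intro t
      rw [eval_comp]
      simp [hQ t]
    have ode := legendre_ode (2*m) (by omega)
    have hdX2 : derivative ((X:Polynomial ℝ)^2) = 2*X := by
      simp [map_ofNat]
      exact one_add_one_eq_two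
    have hP1 : derivative (legendre (2*m))
        = (derivative Q).comp (X^2) * (2 * X) := by
      rw [← hQP, derivative_comp, hdX2]
      ring
    have hd2X : derivative ((2:Polynomial ℝ)*X) = 2 := by simp
    have hP2 : derivative (derivative (legendre (2*m)))
        = ((derivative (derivative Q)).comp (X^2) * (2*X)) * (2*X)
          + (derivative Q).comp (X^2) * 2 := by
      rw [hP1, derivative_mul, derivative_comp, hdX2, hd2X]
      ring
    rw [hP2, hP1, ← hQP] at ode
    apply comp_sq_eq_zero
    simp only [sub_comp, add_comp, mul_comp, ofNat_comp, X_comp, pow_comp, natCast_comp]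
    linear_combination ode
  revert hh
  induction h with
  | zero =>
    intro _
    simp only [Function.iterate_zero, id_eq, hQ1, pow_zero]
    rw [show 2*m + 2*0 - 1 = 2*m - 1 by omega, show ((2*0 : ℕ))‼ = 1 from rfl,
      show 2*m - 2*0 = 2*m by omega]
    have p1 : ((2*m-1)‼ : ℝ) ≠ 0 := by
      exact_mod_cast (Nat.doubleFactorial_pos _).ne'
    have p2 : ((2*m)‼ : ℝ) ≠ 0 := by
      exact_mod_cast (Nat.doubleFactorial_pos _).ne'
    field_simp
    norm_num
  | succ h IH =>
    intro hh
    have hhm : h ≤ m := by omega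
    have hm1 : 1 ≤ m := by omega
    have hr := hrec hm1 h
    rw [IH hhm] at hr
    have h4 : (4*((h:ℝ)+1)) ≠ 0 := by positivity
    apply mul_left_cancel₀ h4
    rw [show (h+1 : ℕ) = h+1 from rfl] at *
    rw [hr]
    have A : (2*m + 2*(h+1) - 1)‼ = (2*m+2*h+1) * (2*m+2*h-1)‼ := by
      rw [show 2*m+2*(h+1)-1 = (2*m+2*h-1)+2 by omega, Nat.doubleFactorial_add_two,
        show 2*m+2*h-1+2 = 2*m+2*h+1 by omega]
    have B : (2*(h+1))‼ = (2*h+2) * (2*h)‼ := by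
      rw [show 2*(h+1) = (2*h)+2 by omega, Nat.doubleFactorial_add_two]
    have Cc : (2*m - 2*h)‼ = (2*m-2*h) * (2*m-2*(h+1))‼ := by
      rw [show 2*m-2*h = (2*m-2*(h+1))+2 by omega, Nat.doubleFactorial_add_two,
        show 2*m-2*(h+1)+2 = 2*m-2*h by omega]
    rw [A, B, Cc]
    have p1 : ((2*m-1)‼ : ℝ) ≠ 0 := by
      exact_mod_cast (Nat.doubleFactorial_pos _).ne'
    have p2 : ((2*h)‼ : ℝ) ≠ 0 := by
      exact_mod_cast (Nat.doubleFactorial_pos _).ne'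
    have p3 : ((2*m-2*(h+1))‼ : ℝ) ≠ 0 := by
      exact_mod_cast (Nat.doubleFactorial_pos _).ne'
    have p4 : ((2:ℝ))^h ≠ 0 := by positivity
    have hsub : ((2*m - 2*h : ℕ) : ℝ) = 2*(m:ℝ) - 2*(h:ℝ) := by
      push_cast [Nat.cast_sub (show 2*h ≤ 2*m by omega)]
      ring
    have p5 : (2*(m:ℝ) - 2*(h:ℝ)) ≠ 0 := by
      have hlt : (h:ℝ) < (m:ℝ) := by exact_mod_cast (show h < m by omega)
      intro hc
      nlinarith
    push_cast [hsub]
    have p6 : ((m:ℝ) - (h:ℝ)) ≠ 0 := fun hc => p5 (by linarith)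
    field_simp
    ring
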